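/- arXiv:2305.02892 — 6 statements merged into one kernel-verified Lean document; each statement's English description precedes it below -/
import Mathlib

section
/- Let V be a vector space over a field of characteristic not 2, G a bilinear form on V, and φ₁,…,φ_r linearly independent linear forms on V with common kernel V₀. Then the restriction of G to V₀ is symmetric if and only if there exist linear forms c₁,…,c_r on V such that G(v,w) − G(w,v) = Σ_α (c_α(v)φ_α(w) − c_α(w)φ_α(v)) for all v,w ∈ V. -/
/-- Dual family for linearly independent functionals. -/
lemma exists_dual_family {k V : Type*} [Field k] [AddCommGroup V] [Module k V]
    {r : ℕ} {φ : Fin r → (V →ₗ[k] k)} (hφ : LinearIndependent k φ) :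
    ∃ e : Fin r → V, ∀ α β, φ α (e β) = if α = β then 1 else 0 := by
  set Φ : V →ₗ[k] (Fin r → k) := LinearMap.pi φ with hΦ
  have hsurj : Function.Surjective Φ := by
    rw [← LinearMap.range_eq_top]
    by_contra hn
    obtain ⟨ψ, hψ0, hψ⟩ := (LinearMap.range Φ).exists_dual_map_eq_bot_of_lt_top
      (lt_top_iff_ne_top.mpr hn) inferInstance
    have hker : ∀ v : V, ψ (Φ v) = 0 := by
      intro v
      have : ψ (Φ v) ∈ (LinearMap.range Φ).map ψ :=
        Submodule.mem_map_of_mem (LinearMap.mem_range_self _ v)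
      rw [hψ] at this
      simpa using this
    have hψw : ∀ w : Fin r → k, ψ w = ∑ α, w α * ψ (Pi.single α 1) := by
      intro w
      have : w = ∑ α, w α • (Pi.single α 1 : Fin r → k) := by
        ext i; simp [Finset.sum_apply, Pi.single_apply]
      conv_lhs => rw [this]
      simp [mul_comm]
    have hg : ∀ α, ψ (Pi.single α 1) = 0 := by
      have h0 : ∑ α, ψ (Pi.single α 1) • φ α = 0 := by
        ext v
        have := hker v
        rw [hψw] at this
        simpa [mul_comm, hΦ] using this
      exact fun α => Fintype.linearIndependent_iff.mp hφ _ h0 α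
    apply hψ0
    apply LinearMap.ext
    intro w
    rw [hψw w]
    simp [hg]
  refine ⟨fun β => Function.surjInv hsurj (Pi.single β 1 : Fin r → k), fun α β => ?_⟩
  have := Function.surjInv_eq hsurj (Pi.single β 1 : Fin r → k)
  have : Φ (Function.surjInv hsurj (Pi.single β 1 : Fin r → k)) α = (Pi.single β 1 : Fin r → k) α := by rw [this]
  simpa [hΦ, Pi.single_apply, eq_comm] using this

/-- Let `V` be a vector space over a field `k` of characteristic ≠ 2,
`G` a bilinear form on `V`, and `φ₁,…,φ_r` linearly independent linear forms on `V`
with common kernel `V₀`. The restriction of `G` to `V₀` is symmetric iff there exist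
linear forms `c_α` with `G(v,w) − G(w,v) = Σ_α (c_α(v)φ_α(w) − c_α(w)φ_α(v))`. -/
theorem stmt0 {k V : Type*} [Field k] [AddCommGroup V] [Module k V]
    (hchar : (2 : k) ≠ 0) (r : ℕ)
    (G : V →ₗ[k] V →ₗ[k] k) (φ : Fin r → (V →ₗ[k] k))
    (hφ : LinearIndependent k φ) :
    (∀ v w : V, (∀ α, φ α v = 0) → (∀ α, φ α w = 0) → G v w = G w v) ↔
      ∃ c : Fin r → (V →ₗ[k] k),
        ∀ v w : V, G v w - G w v = ∑ α, (c α v * φ α w - c α w * φ α v) := by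
  constructor
  · intro hsym
    obtain ⟨e, he⟩ := exists_dual_family hφ
    set A : V →ₗ[k] V →ₗ[k] k := G - G.flip with hA
    have hAapp : ∀ v w, A v w = G v w - G w v := by
      intro v w; simp [hA]
    set c : Fin r → (V →ₗ[k] k) := fun α =>
      A.flip (e α) + (2⁻¹ : k) • ∑ β, A (e α) (e β) • φ β with hc
    have hcapp : ∀ α v, c α v = A v (e α) + 2⁻¹ * ∑ β, A (e α) (e β) * φ β v := by
      intro α v
      simp [hc, LinearMap.sum_apply, Finset.mul_sum, smul_eq_mul, mul_assoc]
    set S : V →ₗ[k] V →ₗ[k] k :=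
      ∑ α, ((c α).smulRight (φ α) - (φ α).smulRight (c α)) with hS
    have hSapp : ∀ v w, S v w = ∑ α, (c α v * φ α w - c α w * φ α v) := by
      intro v w
      simp [hS, LinearMap.sum_apply, smul_eq_mul, mul_comm]
    set D : V →ₗ[k] V →ₗ[k] k := A - S with hD
    have hDapp : ∀ v w, D v w = A v w - ∑ α, (c α v * φ α w - c α w * φ α v) := by
      intro v w; simp [hD, hSapp]
    have h2 : (2 : k)⁻¹ * 2 = 1 := inv_mul_cancel₀ hchar
    have key : ∀ v w, D v w + D w v = 0 := by
      intro v w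
      rw [hDapp, hDapp, hAapp, hAapp]
      have hs : ∑ α, (c α v * φ α w - c α w * φ α v)
          + ∑ α, (c α w * φ α v - c α v * φ α w) = 0 := by
        rw [← Finset.sum_add_distrib]
        exact Finset.sum_eq_zero fun α _ => by ring
      linear_combination -hs
    have hD1 : ∀ β w, D (e β) w = 0 := by
      intro β w
      have h1 : ∀ α, c α (e β) = 2⁻¹ * (A (e β) (e α)) := by
        intro α
        rw [hcapp]
        have : ∑ γ, A (e α) (e γ) * φ γ (e β) = A (e α) (e β) := by
          simp [he, mul_ite, mul_one, mul_zero]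
        rw [this, hAapp, hAapp]
        linear_combination (G (e α) (e β) - G (e β) (e α)) * h2
      rw [hDapp]
      rw [Finset.sum_sub_distrib]
      have h2s : ∑ α, c α w * φ α (e β) = c β w := by
        simp [he, mul_ite, mul_one, mul_zero]
      rw [h2s, hcapp β w]
      simp only [h1]
      have h3 : ∑ α, 2⁻¹ * A (e β) (e α) * φ α w
          = 2⁻¹ * ∑ α, A (e β) (e α) * φ α w := by
        rw [Finset.mul_sum]; exact Finset.sum_congr rfl fun α _ => by ring
      rw [h3, hAapp, hAapp]
      ring
    have hD2 : ∀ v β, D v (e β) = 0 := by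
      intro v β
      have h := key v (e β)
      rw [hD1 β v] at h
      simpa using h
    have hπ : ∀ u α, φ α (u - ∑ γ, φ γ u • e γ) = 0 := by
      intro u α
      simp [map_sub, map_sum, map_smul, he, smul_eq_mul, mul_ite, mul_one, mul_zero]
    have hD0 : ∀ v w, (∀ α, φ α v = 0) → (∀ α, φ α w = 0) → D v w = 0 := by
      intro v w hv hw
      rw [hDapp, hAapp]
      rw [hsym v w hv hw]
      simp [hv, hw]
    have hDz : ∀ v w, D v w = 0 := by
      intro v w
      have expand1 : D v w = D (v - ∑ α, φ α v • e α) w + ∑ α, φ α v • D (e α) w := by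
        conv_lhs => rw [show v = (v - ∑ α, φ α v • e α) + ∑ α, φ α v • e α from
          (sub_add_cancel _ _).symm]
        rw [map_add, LinearMap.add_apply, map_sum, LinearMap.sum_apply]
        congr 1
        exact Finset.sum_congr rfl fun α _ => by rw [map_smul, LinearMap.smul_apply]
      rw [expand1]
      have h1 : ∑ α, φ α v • D (e α) w = 0 := by
        simp [hD1]
      rw [h1, add_zero]
      set v' := v - ∑ α, φ α v • e α with hv'
      have expand2 : D v' w = D v' (w - ∑ α, φ α w • e α) + ∑ α, φ α w • D v' (e α) := by
        conv_lhs => rw [show w = (w - ∑ α, φ α w • e α) + ∑ α, φ α w • e α from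
          (sub_add_cancel _ _).symm]
        rw [map_add, map_sum]
        congr 1
        exact Finset.sum_congr rfl fun α _ => by rw [map_smul]
      rw [expand2]
      have h2' : ∑ α, φ α w • D v' (e α) = 0 := by
        simp [hD2]
      rw [h2', add_zero]
      exact hD0 _ _ (fun α => hπ v α) (fun α => hπ w α)
    refine ⟨c, fun v w => ?_⟩
    have h' := hDz v w
    rw [hDapp, hAapp] at h'
    exact sub_eq_zero.mp h'
  · rintro ⟨c, hc⟩ v w hv hw
    have h := hc v w
    simp only [hv, hw, mul_zero, zero_mul, sub_zero, Finset.sum_const_zero] at h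
    exact sub_eq_zero.mp h
end

section
/- Define q_n as the n-th Taylor coefficient (times n!) of Q(t) = (1−t)^{−(d/2−Δ)}(1+t)^{d/2+s−2} at t = 0, i.e. q_n = Σ_{m=0}^{n} C(n,m)(d/2−Δ)_m [d/2+s−2]_{n−m}, where (x)_m is the rising and [x]_k the falling factorial. Then q_n satisfies q_{n+2} − (d−Δ+s−2)q_{n+1} + (n+1)(Δ+s−(n+2))q_n = 0 for all n ≥ 0. -/
open Finset

/-- The Taylor coefficients (times `n!`) of `(1−t)^{−(d/2−Δ)}(1+t)^{d/2+s−2}` at `t = 0`: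
`q_n = Σ_{m=0}^{n} C(n,m) (d/2−Δ)_m [d/2+s−2]_{n−m}`. -/
noncomputable def qCoef (d Δ s : ℝ) (n : ℕ) : ℝ :=
  ∑ m ∈ range (n + 1),
    (n.choose m : ℝ) * (ascPochhammer ℝ m).eval (d / 2 - Δ) *
      (descPochhammer ℝ (n - m)).eval (d / 2 + s - 2)

/-- Parameter-explicit form of the coefficients. -/
noncomputable def QQ (a b : ℝ) (n : ℕ) : ℝ :=
  ∑ m ∈ range (n + 1),
    (n.choose m : ℝ) * (ascPochhammer ℝ m).eval a *
      (descPochhammer ℝ (n - m)).eval b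

lemma asc_eval_succ_left (x : ℝ) (m : ℕ) :
    (ascPochhammer ℝ (m + 1)).eval x = x * (ascPochhammer ℝ m).eval (x + 1) := by
  rw [ascPochhammer_succ_left]
  simp [Polynomial.eval_comp]

lemma desc_eval_succ_left (x : ℝ) (m : ℕ) :
    (descPochhammer ℝ (m + 1)).eval x = x * (descPochhammer ℝ m).eval (x - 1) := by
  rw [descPochhammer_succ_left]
  simp [Polynomial.eval_comp]

lemma asc_eval_succ_right (x : ℝ) (m : ℕ) :
    (ascPochhammer ℝ (m + 1)).eval x = (ascPochhammer ℝ m).eval x * (x + m) := by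
  rw [ascPochhammer_succ_right]
  simp

lemma desc_eval_succ_right (x : ℝ) (m : ℕ) :
    (descPochhammer ℝ (m + 1)).eval x = (descPochhammer ℝ m).eval x * (x - m) := by
  rw [descPochhammer_succ_right]
  simp

/-- Pascal split of a binomially weighted sum. -/
lemma choose_split (f : ℕ → ℝ) (n : ℕ) :
    ∑ m ∈ range (n + 2), ((n + 1).choose m : ℝ) * f m =
      ∑ m ∈ range (n + 1), (n.choose m : ℝ) * f m +
        ∑ m ∈ range (n + 1), (n.choose m : ℝ) * f (m + 1) := by
  rw [Finset.sum_range_succ' (fun m => ((n + 1).choose m : ℝ) * f m)]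
  have h : ∀ m ∈ range (n + 1), ((n + 1).choose (m + 1) : ℝ) * f (m + 1) =
      (n.choose m : ℝ) * f (m + 1) + (n.choose (m + 1) : ℝ) * f (m + 1) := by
    intro m _
    rw [Nat.choose_succ_succ]
    push_cast
    ring
  rw [Finset.sum_congr rfl h, Finset.sum_add_distrib]
  have h2 : ∑ m ∈ range (n + 1), (n.choose (m + 1) : ℝ) * f (m + 1) =
      ∑ m ∈ range (n + 1), (n.choose m : ℝ) * f m - (n.choose 0 : ℝ) * f 0 := by
    rw [eq_sub_iff_add_eq, ← Finset.sum_range_succ' (fun m => (n.choose m : ℝ) * f m),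
      Finset.sum_range_succ]
    simp
  rw [h2]
  simp only [Nat.choose_zero_right, Nat.cast_one, one_mul]
  ring

/-- Derivative identity `q_{n+1}(a,b) = a q_n(a+1,b) + b q_n(a,b−1)`. -/
lemma QQ_D (a b : ℝ) (n : ℕ) :
    QQ a b (n + 1) = a * QQ (a + 1) b n + b * QQ a (b - 1) n := by
  have key := choose_split
    (fun m => (ascPochhammer ℝ m).eval a * (descPochhammer ℝ (n + 1 - m)).eval b) n
  unfold QQ
  simp only [mul_assoc] at key ⊢
  rw [key]
  rw [Finset.mul_sum, Finset.mul_sum, add_comm]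
  congr 1
  · -- second split sum: asc (m+1) part
    refine Finset.sum_congr rfl fun m hm => ?_
    have hm' : m ≤ n := Nat.lt_succ_iff.mp (Finset.mem_range.mp hm)
    have : n + 1 - (m + 1) = n - m := by omega
    rw [this, asc_eval_succ_left]
    ring
  · -- first split sum: desc part
    refine Finset.sum_congr rfl fun m hm => ?_
    have hm' : m ≤ n := Nat.lt_succ_iff.mp (Finset.mem_range.mp hm)
    have : n + 1 - m = (n - m) + 1 := by omega
    rw [this, desc_eval_succ_left]
    ring

/-- Contiguous relation in `a`: `q_{n+1}(a,b) = q_{n+1}(a+1,b) − (n+1) q_n(a+1,b)`. -/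
lemma QQ_C1 (a b : ℝ) (n : ℕ) :
    QQ a b (n + 1) = QQ (a + 1) b (n + 1) - ((n : ℝ) + 1) * QQ (a + 1) b n := by
  unfold QQ
  rw [Finset.sum_range_succ' (fun m => ((n+1).choose m : ℝ) * (ascPochhammer ℝ m).eval a *
      (descPochhammer ℝ (n + 1 - m)).eval b),
    Finset.sum_range_succ' (fun m => ((n+1).choose m : ℝ) * (ascPochhammer ℝ m).eval (a+1) *
      (descPochhammer ℝ (n + 1 - m)).eval b)]
  have hterm : ∀ m ∈ range (n + 1),
      ((n+1).choose (m+1) : ℝ) * (ascPochhammer ℝ (m+1)).eval a *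
        (descPochhammer ℝ (n + 1 - (m+1))).eval b =
      (((n+1).choose (m+1) : ℝ) * (ascPochhammer ℝ (m+1)).eval (a+1) *
        (descPochhammer ℝ (n + 1 - (m+1))).eval b) -
      (((n : ℝ) + 1) * ((n.choose m : ℝ) * (ascPochhammer ℝ m).eval (a+1) *
        (descPochhammer ℝ (n - m)).eval b)) := by
    intro m hm
    have hm' : m ≤ n := Nat.lt_succ_iff.mp (Finset.mem_range.mp hm)
    have hsub : n + 1 - (m + 1) = n - m := by omega
    have hasc : (ascPochhammer ℝ (m+1)).eval a =
        (ascPochhammer ℝ (m+1)).eval (a+1) - ((m : ℝ) + 1) * (ascPochhammer ℝ m).eval (a+1) := by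
      rw [asc_eval_succ_left, asc_eval_succ_right]
      ring
    have hchoose : ((n+1).choose (m+1) : ℝ) * ((m : ℝ) + 1) =
        ((n : ℝ) + 1) * (n.choose m : ℝ) := by
      exact_mod_cast (Nat.add_one_mul_choose_eq n m).symm
    rw [hsub, hasc]
    linear_combination (-(Polynomial.eval (a+1) (ascPochhammer ℝ m) *
      Polynomial.eval b (descPochhammer ℝ (n - m)))) * hchoose
  rw [Finset.sum_congr rfl hterm, Finset.sum_sub_distrib]
  simp only [ascPochhammer_zero, Polynomial.eval_one, Nat.choose_zero_right, Nat.cast_one]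
  rw [Finset.mul_sum]
  ring

/-- Contiguous relation in `b`: `q_{n+1}(a,b) = q_{n+1}(a,b−1) + (n+1) q_n(a,b−1)`. -/
lemma QQ_C2 (a b : ℝ) (n : ℕ) :
    QQ a b (n + 1) = QQ a (b - 1) (n + 1) + ((n : ℝ) + 1) * QQ a (b - 1) n := by
  unfold QQ
  rw [Finset.sum_range_succ (fun m => ((n+1).choose m : ℝ) * (ascPochhammer ℝ m).eval a *
      (descPochhammer ℝ (n + 1 - m)).eval b),
    Finset.sum_range_succ (fun m => ((n+1).choose m : ℝ) * (ascPochhammer ℝ m).eval a *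
      (descPochhammer ℝ (n + 1 - m)).eval (b-1))]
  have hterm : ∀ m ∈ range (n + 1),
      ((n+1).choose m : ℝ) * (ascPochhammer ℝ m).eval a *
        (descPochhammer ℝ (n + 1 - m)).eval b =
      (((n+1).choose m : ℝ) * (ascPochhammer ℝ m).eval a *
        (descPochhammer ℝ (n + 1 - m)).eval (b-1)) +
      (((n : ℝ) + 1) * ((n.choose m : ℝ) * (ascPochhammer ℝ m).eval a *
        (descPochhammer ℝ (n - m)).eval (b-1))) := by
    intro m hm
    have hm' : m ≤ n := Nat.lt_succ_iff.mp (Finset.mem_range.mp hm)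
    have hsub : n + 1 - m = (n - m) + 1 := by omega
    have hcast : ((n - m : ℕ) : ℝ) = (n : ℝ) - (m : ℝ) := by
      push_cast [Nat.cast_sub hm']
      ring
    have hdesc : (descPochhammer ℝ ((n-m)+1)).eval b =
        (descPochhammer ℝ ((n-m)+1)).eval (b-1)
          + (((n : ℝ) - (m : ℝ)) + 1) * (descPochhammer ℝ (n-m)).eval (b-1) := by
      rw [desc_eval_succ_left, desc_eval_succ_right, hcast]
      ring
    have hchooseN : (n+1).choose m * (n+1-m) = (n+1) * n.choose m := by
      rw [← Nat.choose_symm (by omega : m ≤ n+1), (by omega : n+1-m = (n-m)+1),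
        ← Nat.add_one_mul_choose_eq, Nat.choose_symm hm']
    have hchoose : ((n+1).choose m : ℝ) * (((n : ℝ) - (m : ℝ)) + 1) =
        ((n : ℝ) + 1) * (n.choose m : ℝ) := by
      have h4 := congrArg (Nat.cast : ℕ → ℝ) hchooseN
      push_cast [Nat.cast_sub (by omega : m ≤ n + 1)] at h4
      linarith [h4]
    rw [hsub, hdesc]
    linear_combination (Polynomial.eval a (ascPochhammer ℝ m) *
      Polynomial.eval (b-1) (descPochhammer ℝ (n-m))) * hchoose
  rw [Finset.sum_congr rfl hterm, Finset.sum_add_distrib]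
  simp only [Nat.sub_self, descPochhammer_zero, Polynomial.eval_one]
  rw [Finset.mul_sum]
  ring

/-- Key contiguous combination: `a q_n(a+1,b) − b q_n(a,b−1) = (n + a − b) q_n(a,b)`. -/
lemma QQ_K (a b : ℝ) : ∀ n : ℕ,
    a * QQ (a + 1) b n - b * QQ a (b - 1) n = ((n : ℝ) + a - b) * QQ a b n := by
  intro n
  cases n with
  | zero =>
    have h : ∀ x y : ℝ, QQ x y 0 = 1 := by
      intro x y
      simp [QQ]
    rw [h, h, h]
    norm_num
  | succ n =>
    push_cast
    linear_combination (-a) * QQ_C1 a b n + b * QQ_C2 a b n - ((n : ℝ) + 1) * QQ_D a b n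

/-- The recursion for `QQ`. -/
lemma QQ_rec (a b : ℝ) (n : ℕ) :
    QQ a b (n + 2) = (a + b) * QQ a b (n + 1)
      + ((n : ℝ) + 1) * ((n : ℝ) + a - b) * QQ a b n := by
  linear_combination QQ_D a b (n + 1) - a * QQ_C1 a b n - b * QQ_C2 a b n
    + ((n : ℝ) + 1) * QQ_K a b n

/-- The coefficients `q_n` satisfy the recursion
`q_{n+2} − (d−Δ+s−2) q_{n+1} + (n+1)(Δ+s−(n+2)) q_n = 0` for all `n ≥ 0`. -/
theorem stmt7 (d Δ s : ℝ) (n : ℕ) :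
    qCoef d Δ s (n + 2) - (d - Δ + s - 2) * qCoef d Δ s (n + 1)
      + ((n : ℝ) + 1) * (Δ + s - ((n : ℝ) + 2)) * qCoef d Δ s n = 0 := by
  have hq : ∀ k, qCoef d Δ s k = QQ (d / 2 - Δ) (d / 2 + s - 2) k := fun k => rfl
  have h := QQ_rec (d / 2 - Δ) (d / 2 + s - 2) n
  rw [hq, hq, hq, h]
  ring
end

section
/- Let ν_n = q_n / [Δ+s−2]_n where q_n = Σ_{m=0}^{n} C(n,m)(d/2−Δ)_m [d/2+s−2]_{n−m} and [Δ+s−2]_n ≠ 0 for the relevant n. Then for all n ≥ 2, ((Δ+s−2)−(n−1))·ν_n − (d−Δ+s−2)·ν_{n−1} + (n−1)·ν_{n−2} = 0. -/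
open Finset

noncomputable def aP (a : ℝ) (m : ℕ) : ℝ := (ascPochhammer ℝ m).eval a
noncomputable def dP (b : ℝ) (k : ℕ) : ℝ := (descPochhammer ℝ k).eval b

noncomputable def Q (a b : ℝ) (n : ℕ) : ℝ :=
  ∑ m ∈ range (n + 1), (n.choose m : ℝ) * aP a m * dP b (n - m)

lemma aP_succ (a : ℝ) (m : ℕ) : aP a (m+1) = aP a m * (a + m) :=
  ascPochhammer_succ_eval m a

lemma dP_succ (b : ℝ) (k : ℕ) : dP b (k+1) = dP b k * (b - k) :=
  descPochhammer_succ_eval k b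

/-- P sum -/
noncomputable def Psum (a b : ℝ) (k : ℕ) : ℝ :=
  ∑ m ∈ range (k + 1), (k.choose m : ℝ) * aP a m * dP b (k + 1 - m)

/-- U sum -/
noncomputable def Usum (a b : ℝ) (k : ℕ) : ℝ :=
  ∑ m ∈ range (k + 1), (k.choose m : ℝ) * aP a (m+1) * dP b (k - m)

lemma L1 (a b : ℝ) (k : ℕ) : Q a b (k+1) = Psum a b k + Usum a b k := by
  rw [Q, Finset.sum_range_succ' _ (k+1)]
  have hsplit : ∀ i ∈ range (k+1),
      (((k+1).choose (i+1) : ℝ)) * aP a (i+1) * dP b (k+1-(i+1)) =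
      ((k.choose i : ℝ)) * aP a (i+1) * dP b (k - i)
        + ((k.choose (i+1) : ℝ)) * aP a (i+1) * dP b (k - i) := by
    intro i _
    have : (k+1).choose (i+1) = k.choose i + k.choose (i+1) := Nat.choose_succ_succ k i
    rw [this, Nat.succ_sub_succ]
    push_cast
    ring
  rw [Finset.sum_congr rfl hsplit, Finset.sum_add_distrib]
  have hR : (∑ i ∈ range (k+1), ((k.choose (i+1) : ℝ)) * aP a (i+1) * dP b (k - i))
      = ∑ i ∈ range k, ((k.choose (i+1) : ℝ)) * aP a (i+1) * dP b (k - i) := by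
    rw [Finset.sum_range_succ]
    simp
  have hP : Psum a b k =
      (∑ i ∈ range k, ((k.choose (i+1) : ℝ)) * aP a (i+1) * dP b (k - i))
        + ((k.choose 0 : ℝ)) * aP a 0 * dP b (k+1) := by
    rw [Psum, Finset.sum_range_succ' _ k]
    congr 1
    apply Finset.sum_congr rfl
    intro i _
    rw [Nat.succ_sub_succ]
  have hU : Usum a b k = ∑ i ∈ range (k+1), ((k.choose i : ℝ)) * aP a (i+1) * dP b (k - i) := rfl
  rw [hR, hP, hU]
  simp only [Nat.choose_zero_right, Nat.cast_one, Nat.sub_zero]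
  ring

lemma L2 (a b : ℝ) (k : ℕ) :
    Psum a b k - Usum a b k = (b - a - k) * Q a b k := by
  rw [Psum, Usum, Q, ← Finset.sum_sub_distrib, Finset.mul_sum]
  apply Finset.sum_congr rfl
  intro m hm
  have hmk : m ≤ k := Nat.lt_succ_iff.mp (Finset.mem_range.mp hm)
  have h1 : k + 1 - m = (k - m) + 1 := by omega
  have hc : ((k - m : ℕ) : ℝ) = (k : ℝ) - m := by
    rw [Nat.cast_sub hmk]
  rw [h1, dP_succ, aP_succ, hc]
  ring

lemma L3 (a b : ℝ) (k : ℕ) :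
    Psum a b k + Usum a b k
      = (a + b - k) * Q a b k
        + 2 * ∑ m ∈ range (k+1), (m : ℝ) * ((k.choose m : ℝ) * aP a m * dP b (k - m)) := by
  rw [Psum, Usum, ← Finset.sum_add_distrib, Q, Finset.mul_sum, Finset.mul_sum,
    ← Finset.sum_add_distrib]
  apply Finset.sum_congr rfl
  intro m hm
  have hmk : m ≤ k := Nat.lt_succ_iff.mp (Finset.mem_range.mp hm)
  have h1 : k + 1 - m = (k - m) + 1 := by omega
  have hc : ((k - m : ℕ) : ℝ) = (k : ℝ) - m := by
    rw [Nat.cast_sub hmk]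
  rw [h1, dP_succ, aP_succ, hc]
  ring

lemma L4 (a b : ℝ) (n : ℕ) :
    (∑ m ∈ range (n+2), (m : ℝ) * (((n+1).choose m : ℝ) * aP a m * dP b (n+1 - m)))
      = ((n : ℝ) + 1) * Usum a b n := by
  rw [Finset.sum_range_succ' _ (n+1)]
  simp only [Nat.cast_zero, zero_mul, add_zero]
  rw [Usum, Finset.mul_sum]
  apply Finset.sum_congr rfl
  intro j _
  have hch : (n+1) * n.choose j = (n+1).choose (j+1) * (j+1) := by
    rw [← Nat.add_one_mul_choose_eq]
  have : ((j:ℝ)+1) * ((n+1).choose (j+1) : ℝ) = ((n:ℝ)+1) * (n.choose j : ℝ) := by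
    have := congrArg (fun t : ℕ => (t : ℝ)) hch
    push_cast at this
    linarith
  rw [Nat.succ_sub_succ]
  push_cast
  linear_combination this * (aP a (j + 1) * dP b (n - j))

lemma qrec (a b : ℝ) (n : ℕ) :
    Q a b (n+2) = (a+b) * Q a b (n+1) - ((n:ℝ)+1) * (b - a - n) * Q a b n := by
  have h1 := L1 a b (n+1)
  have h2 := L3 a b (n+1)
  have h3 := L4 a b n
  have h4 := L1 a b n
  have h5 := L2 a b n
  rw [h3] at h2
  push_cast at h2
  linear_combination h1 + h2 - ((n:ℝ)+1) * h4 - ((n:ℝ)+1) * h5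

lemma qCoef_eq (d Δ s : ℝ) (n : ℕ) : qCoef d Δ s n = Q (d/2 - Δ) (d/2 + s - 2) n := rfl

/-- Let `ν_n = q_n / [Δ+s−2]_n` with `[Δ+s−2]_k ≠ 0` for all `k ≤ n+2`.
Then (writing `n+2` for the index `n ≥ 2` of the informal statement)
`((Δ+s−2)−(n+1))·ν_{n+2} − (d−Δ+s−2)·ν_{n+1} + (n+1)·ν_n = 0`. -/
theorem stmt8 (d Δ s : ℝ) (n : ℕ)
    (hden : ∀ k ≤ n + 2, (descPochhammer ℝ k).eval (Δ + s - 2) ≠ 0)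
    (ν : ℕ → ℝ)
    (hν : ∀ k : ℕ, ν k = qCoef d Δ s k / (descPochhammer ℝ k).eval (Δ + s - 2)) :
    ((Δ + s - 2) - ((n : ℝ) + 1)) * ν (n + 2) - (d - Δ + s - 2) * ν (n + 1)
      + ((n : ℝ) + 1) * ν n = 0 := by
  have hD0 : (descPochhammer ℝ n).eval (Δ + s - 2) ≠ 0 := hden n (by omega)
  have hD1 : (descPochhammer ℝ (n+1)).eval (Δ + s - 2) ≠ 0 := hden (n+1) (by omega)
  have hD2 : (descPochhammer ℝ (n+2)).eval (Δ + s - 2) ≠ 0 := hden (n+2) (by omega)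
  have e1 : (descPochhammer ℝ (n+1)).eval (Δ + s - 2)
      = (descPochhammer ℝ n).eval (Δ + s - 2) * ((Δ + s - 2) - n) :=
    descPochhammer_succ_eval n _
  have e2 : (descPochhammer ℝ (n+2)).eval (Δ + s - 2)
      = (descPochhammer ℝ (n+1)).eval (Δ + s - 2) * ((Δ + s - 2) - ((n:ℝ)+1)) := by
    have := descPochhammer_succ_eval (n+1) (Δ + s - 2 : ℝ)
    push_cast at this
    exact this
  have hu : (Δ + s - 2) - (n:ℝ) ≠ 0 := by
    intro h; apply hD1; rw [e1, h, mul_zero]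
  have hv : (Δ + s - 2) - ((n:ℝ)+1) ≠ 0 := by
    intro h; apply hD2; rw [e2, h, mul_zero]
  have key : qCoef d Δ s (n+2)
      = (d - Δ + s - 2) * qCoef d Δ s (n+1)
        - ((n:ℝ)+1) * ((Δ + s - 2) - n) * qCoef d Δ s n := by
    have h := qrec (d/2 - Δ) (d/2 + s - 2) n
    rw [qCoef_eq, qCoef_eq, qCoef_eq]
    linear_combination h
  rw [hν, hν, hν, e2, e1, key]
  field_simp
  ring
end

section
/- Let ν_n^{(Δ)} = ([d/2+s−2]_n / [Δ+s−2]_n) · ₂F₁(−n, d/2−Δ; d/2+s−1−n; −1) with d, s fixed and Δ = Δ_ℓ depending on a parameter ℓ such that Δ_ℓ/ℓ → m ≠ 0 as ℓ → ∞. Then for each fixed n and s, ν_n^{(Δ_ℓ)} → (−1)^n as ℓ → ∞. -/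
open Finset Filter

private lemma asc_eval_prod (x : ℝ) (k : ℕ) :
    (ascPochhammer ℝ k).eval x = ∏ j ∈ range k, (x + j) := by
  induction k with
  | zero => simp
  | succ k ih => rw [ascPochhammer_succ_eval, ih, prod_range_succ]

private lemma desc_eval_prod (x : ℝ) (k : ℕ) :
    (descPochhammer ℝ k).eval x = ∏ j ∈ range k, (x - j) := by
  induction k with
  | zero => simp
  | succ k ih => rw [descPochhammer_succ_eval, ih, prod_range_succ]

private lemma abs_aux {Δ : ℕ → ℝ} {m : ℝ} (hm : m ≠ 0)
    (hΔ : Tendsto (fun ℓ : ℕ => Δ ℓ / (ℓ : ℝ)) atTop (nhds m)) :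
    Tendsto (fun ℓ : ℕ => |Δ ℓ|) atTop atTop := by
  have h1 : Tendsto (fun ℓ : ℕ => |Δ ℓ / (ℓ : ℝ)| * (ℓ : ℝ)) atTop atTop :=
    Tendsto.pos_mul_atTop (abs_pos.mpr hm) (hΔ.abs) tendsto_natCast_atTop_atTop
  refine h1.congr' ?_
  filter_upwards [eventually_ge_atTop 1] with ℓ hℓ
  have hℓ0 : (ℓ : ℝ) ≠ 0 := by positivity
  rw [abs_div, abs_of_nonneg (by positivity : (0:ℝ) ≤ (ℓ:ℝ)), div_mul_cancel₀ _ hℓ0]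

private lemma inv_aux {Δ : ℕ → ℝ} (habs : Tendsto (fun ℓ : ℕ => |Δ ℓ|) atTop atTop) (b : ℝ) :
    Tendsto (fun ℓ : ℕ => (Δ ℓ + b)⁻¹) atTop (nhds 0) := by
  have h1 : Tendsto (fun ℓ : ℕ => |Δ ℓ + b|) atTop atTop := by
    refine tendsto_atTop_mono' _ ?_ (tendsto_atTop_add_const_right _ (-|b|) habs)
    filter_upwards with ℓ
    have := abs_add_le (Δ ℓ + b) (-b)
    simp only [add_neg_cancel_right, abs_neg] at this
    linarith
  rw [tendsto_zero_iff_abs_tendsto_zero]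
  exact (tendsto_inv_atTop_zero.comp h1).congr fun ℓ => (abs_inv _).symm

private lemma factor_aux {Δ : ℕ → ℝ} (habs : Tendsto (fun ℓ : ℕ => |Δ ℓ|) atTop atTop)
    (a b : ℝ) : Tendsto (fun ℓ : ℕ => (a - Δ ℓ) / (Δ ℓ + b)) atTop (nhds (-1)) := by
  have h2 := (inv_aux habs b).const_mul (a + b)
  rw [mul_zero] at h2
  have h3 := h2.const_add (-1)
  rw [add_zero] at h3
  refine h3.congr' ?_
  have h4 : ∀ᶠ ℓ : ℕ in atTop, Δ ℓ + b ≠ 0 := by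
    filter_upwards [habs.eventually_gt_atTop |b|] with ℓ hℓ
    intro h
    rw [show Δ ℓ = -b by linarith] at hℓ
    simp [abs_neg] at hℓ
  filter_upwards [h4] with ℓ hℓ
  field_simp
  ring

/-- With `d, s` fixed reals, `n` a fixed natural (such that the lower
Pochhammer parameter `d/2+s−1−n` is nondegenerate), and `Δ_ℓ` a real sequence with
`Δ_ℓ/ℓ → m ≠ 0`, the coefficients
`ν_n^{(Δ)} = ([d/2+s−2]_n / [Δ+s−2]_n) · ₂F₁(−n, d/2−Δ; d/2+s−1−n; −1)`
tend to `(−1)^n` as `ℓ → ∞`. -/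
theorem stmt9 (d s : ℝ) (n : ℕ)
    (hc : ∀ k ≤ n, (ascPochhammer ℝ k).eval (d / 2 + s - 1 - (n : ℝ)) ≠ 0)
    (Δ : ℕ → ℝ) (m : ℝ) (hm : m ≠ 0)
    (hΔ : Tendsto (fun ℓ : ℕ => Δ ℓ / (ℓ : ℝ)) atTop (nhds m)) :
    Tendsto
      (fun ℓ : ℕ =>
        ((descPochhammer ℝ n).eval (d / 2 + s - 2) /
            (descPochhammer ℝ n).eval (Δ ℓ + s - 2)) *
          ∑ k ∈ range (n + 1),
            (ascPochhammer ℝ k).eval (-(n : ℝ)) * (ascPochhammer ℝ k).eval (d / 2 - Δ ℓ) /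
                ((ascPochhammer ℝ k).eval (d / 2 + s - 1 - (n : ℝ)) * (k.factorial : ℝ)) *
              (-1) ^ k)
      atTop (nhds ((-1) ^ n)) := by
  have habs := abs_aux hm hΔ
  set c : ℝ := d / 2 + s - 1 - (n : ℝ) with hcdef
  -- constants
  set C : ℕ → ℝ := fun k =>
    (descPochhammer ℝ n).eval (d / 2 + s - 2) * (ascPochhammer ℝ k).eval (-(n : ℝ)) *
      (-1) ^ k / ((ascPochhammer ℝ k).eval c * (k.factorial : ℝ)) with hC
  -- the ratio functions
  set r : ℕ → ℕ → ℝ := fun k ℓ =>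
    (ascPochhammer ℝ k).eval (d / 2 - Δ ℓ) / (descPochhammer ℝ n).eval (Δ ℓ + s - 2) with hr
  have key : ∀ k ≤ n, Tendsto (fun ℓ => r k ℓ) atTop
      (nhds (if k = n then (-1 : ℝ) ^ n else 0)) := by
    intro k hk
    have hrw : ∀ ℓ, r k ℓ =
        (∏ j ∈ range k, (d / 2 - Δ ℓ + j) / (Δ ℓ + s - 2 - j)) *
          ∏ j ∈ Ico k n, (Δ ℓ + s - 2 - j)⁻¹ := by
      intro ℓ
      rw [hr]
      simp only [asc_eval_prod, desc_eval_prod]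
      rw [← prod_range_mul_prod_Ico (fun j : ℕ => (Δ ℓ + s - 2 - j)) hk,
        prod_div_distrib, prod_inv_distrib, div_mul_eq_div_div]
      exact div_eq_mul_inv _ _
    have h1 : Tendsto (fun ℓ => (∏ j ∈ range k, (d / 2 - Δ ℓ + j) / (Δ ℓ + s - 2 - j)) *
          ∏ j ∈ Ico k n, (Δ ℓ + s - 2 - j)⁻¹) atTop
        (nhds ((∏ j ∈ range k, (-1 : ℝ)) * ∏ j ∈ Ico k n, (0 : ℝ))) := by
      refine Tendsto.mul (tendsto_finset_prod _ fun j _ => ?_)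
        (tendsto_finset_prod _ fun j _ => ?_)
      · have := factor_aux habs (d / 2 + j) (s - 2 - j)
        refine this.congr fun ℓ => ?_
        ring_nf
      · have := inv_aux habs (s - 2 - (j : ℝ))
        refine this.congr fun ℓ => ?_
        ring_nf
    have h2 : ((∏ j ∈ range k, (-1 : ℝ)) * ∏ j ∈ Ico k n, (0 : ℝ)) =
        (if k = n then (-1 : ℝ) ^ n else 0) := by
      rcases eq_or_lt_of_le hk with h | h
      · subst h; simp
      · rw [if_neg h.ne, prod_const, prod_const, Nat.card_Ico, zero_pow (by omega), mul_zero]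
    rw [← h2]
    exact (h1.congr fun ℓ => (hrw ℓ).symm)
  -- rewrite the function as a sum of C k * r k
  have hfun : ∀ ℓ,
      ((descPochhammer ℝ n).eval (d / 2 + s - 2) /
          (descPochhammer ℝ n).eval (Δ ℓ + s - 2)) *
        ∑ k ∈ range (n + 1),
          (ascPochhammer ℝ k).eval (-(n : ℝ)) * (ascPochhammer ℝ k).eval (d / 2 - Δ ℓ) /
              ((ascPochhammer ℝ k).eval c * (k.factorial : ℝ)) * (-1) ^ k =
        ∑ k ∈ range (n + 1), C k * r k ℓ := by
    intro ℓ
    rw [mul_sum]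
    refine Finset.sum_congr rfl fun k _ => ?_
    rw [hC, hr]
    ring
  have hsum : Tendsto (fun ℓ => ∑ k ∈ range (n + 1), C k * r k ℓ) atTop
      (nhds (∑ k ∈ range (n + 1), C k * (if k = n then (-1 : ℝ) ^ n else 0))) := by
    refine tendsto_finset_sum _ fun k hk => ?_
    exact (key k (by simpa using Nat.lt_succ_iff.mp (mem_range.mp hk))).const_mul _
  have hval : (∑ k ∈ range (n + 1), C k * (if k = n then (-1 : ℝ) ^ n else 0)) = (-1) ^ n := by
    rw [sum_range_succ]
    rw [if_pos rfl]
    have : ∀ k ∈ range n, C k * (if k = n then (-1 : ℝ) ^ n else 0) = 0 := by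
      intro k hk
      rw [if_neg (by have := mem_range.mp hk; omega), mul_zero]
    rw [sum_congr rfl this, sum_const, smul_zero, zero_add]
    -- compute C n
    have h1 : (descPochhammer ℝ n).eval (d / 2 + s - 2) = (ascPochhammer ℝ n).eval c := by
      rw [descPochhammer_eval_eq_ascPochhammer, hcdef]
      ring_nf
    have h2 : (ascPochhammer ℝ n).eval (-(n : ℝ)) = (-1) ^ n * (n.factorial : ℝ) := by
      rw [ascPochhammer_eval_neg_eq_descPochhammer,
        descPochhammer_eval_eq_descFactorial, Nat.descFactorial_self]
    have hcn : (ascPochhammer ℝ n).eval c ≠ 0 := hc n le_rfl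
    have hfn : (n.factorial : ℝ) ≠ 0 := Nat.cast_ne_zero.mpr n.factorial_ne_zero
    rw [hC]
    simp only [h1, h2]
    field_simp
    ring_nf
    rw [mul_comm n 2, pow_mul, neg_one_sq, one_pow]
  rw [← hval]
  exact hsum.congr fun ℓ => (hfun ℓ).symm
end

section
/- Consider operators on polynomials in variables P^A (A = 0,…,d+1) and an odd pair (b,c), with S = ∂_P·∂_X, S† = −P·∂_X acting on smooth-coefficient polynomials, T₁ = X·∂_P + 2c₀∂_c, T₂ = ∂_P·∂_P + 2∂_b∂_c, N = P·∂_P + b∂_b + c∂_c, h = −X·∂_X − 2c₀∂_{c₀} + b∂_b − c∂_c, and Ω = c₀□ + cS + S†∂_b + c∂_b∂_{c₀} where □ = ∂_X·∂_X. Then the following (anti)commutation relations hold: [Ω,T₂] = 0, [h,T₁] = −T₁, [h,T₂] = 0, [N,T₁] = −T₁, [N,T₂] = −2T₂, [T₁,T₂] = 0, and [Ω,T₁] = −∂_b(h+N−2) + cT₂. -/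
private lemma sw_sub {A : Type*} [Ring A] {x y z : A} (h : x*y - y*x = z) :
    y*x = x*y - z := by rw [← h]; abel

private lemma addform {A : Type*} [Ring A] {a b c : A} (h : a - b = c) :
    a = b + c := by rw [← h]; abel

private lemma sw_neg {A : Type*} [Ring A] {x y : A} (h : x*y + y*x = 0) :
    y*x = -(x*y) := eq_neg_of_add_eq_zero_left (by rw [add_comm]; exact h)

private lemma sw_one {A : Type*} [Ring A] {x y : A} (h : x*y + y*x = 1) :
    y*x = 1 - x*y := eq_sub_of_add_eq' h

private lemma m3 {A : Type*} [Ring A] {x y r : A} (h : y*x = r) (t : A) :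
    y*(x*t) = r*t := by rw [← mul_assoc, h]

private lemma sq3 {A : Type*} [Ring A] {x : A} (h : x*x = 0) (t : A) :
    x*(x*t) = 0 := by rw [← mul_assoc, h, zero_mul]

private lemma smul2 {A : Type*} [Ring A] (a b : A) : a*(2*b) = 2*(a*b) := by
  rw [two_mul, mul_add, two_mul]



/-- In the associative operator algebra generated by the even
operators `□, S = ∂_P·∂_X, S† = −P·∂_X, X·∂_P, P·∂_P, X·∂_X, ∂_P·∂_P` and the odd
ghost operators `c₀, c, b` (left multiplications) and `∂_{c₀}, ∂_c, ∂_b`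
(odd derivations), subject to their standard (anti)commutation relations (listed as
hypotheses, all of which hold in the concrete realization on ghost-extended ambient
fields), the composite operators
`T₁ = X·∂_P + 2c₀∂_c`, `T₂ = ∂_P·∂_P + 2∂_b∂_c`, `N = P·∂_P + b∂_b + c∂_c`,
`h = −X·∂_X − 2c₀∂_{c₀} + b∂_b − c∂_c`, `Ω = c₀□ + cS + S†∂_b + c∂_b∂_{c₀}`
satisfy: `[Ω,T₂] = 0`, `[h,T₁] = −T₁`, `[h,T₂] = 0`, `[N,T₁] = −T₁`,
`[N,T₂] = −2T₂`, `[T₁,T₂] = 0`, and `[Ω,T₁] = −∂_b(h+N−2) + cT₂`. -/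
theorem stmt14 {A : Type*} [Ring A]
    (Box S Sd XdP PdP XdX T2e Mc0 Mc Mb Dc0 Dc Db : A)
    -- commutators among the even operators
    (hBoxS : Box * S = S * Box)
    (hBoxSd : Box * Sd = Sd * Box)
    (hBoxXdP : Box * XdP - XdP * Box = 2 * S)
    (hBoxXdX : Box * XdX - XdX * Box = 2 * Box)
    (hBoxPdP : Box * PdP = PdP * Box)
    (hBoxT2e : Box * T2e = T2e * Box)
    (hSSd : S * Sd - Sd * S = -Box)
    (hSXdP : S * XdP - XdP * S = T2e)
    (hSdXdP : Sd * XdP - XdP * Sd = XdX - PdP)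
    (hXdXS : XdX * S - S * XdX = -S)
    (hXdXSd : XdX * Sd - Sd * XdX = -Sd)
    (hXdXXdP : XdX * XdP - XdP * XdX = XdP)
    (hXdXT2e : XdX * T2e = T2e * XdX)
    (hXdXPdP : XdX * PdP = PdP * XdX)
    (hPdPS : PdP * S - S * PdP = -S)
    (hPdPSd : PdP * Sd - Sd * PdP = Sd)
    (hPdPXdP : PdP * XdP - XdP * PdP = -XdP)
    (hPdPT2e : PdP * T2e - T2e * PdP = -(2 * T2e))
    (hST2e : S * T2e = T2e * S)
    (hSdT2e : Sd * T2e - T2e * Sd = 2 * S)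
    (hXdPT2e : XdP * T2e = T2e * XdP)
    -- ghost operators commute with the even operators
    (hge : ∀ g ∈ ([Mc0, Mc, Mb, Dc0, Dc, Db] : List A),
      ∀ e ∈ ([Box, S, Sd, XdP, PdP, XdX, T2e] : List A), g * e = e * g)
    -- squares of the odd operators vanish
    (hMc0sq : Mc0 * Mc0 = 0) (hMcsq : Mc * Mc = 0) (hMbsq : Mb * Mb = 0)
    (hDc0sq : Dc0 * Dc0 = 0) (hDcsq : Dc * Dc = 0) (hDbsq : Db * Db = 0)
    -- dual pairs anticommute to the identity
    (hMc0Dc0 : Mc0 * Dc0 + Dc0 * Mc0 = 1)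
    (hMcDc : Mc * Dc + Dc * Mc = 1)
    (hMbDb : Mb * Db + Db * Mb = 1)
    -- all other odd pairs anticommute
    (hMc0Mc : Mc0 * Mc + Mc * Mc0 = 0) (hMc0Mb : Mc0 * Mb + Mb * Mc0 = 0)
    (hMcMb : Mc * Mb + Mb * Mc = 0)
    (hMc0Dc : Mc0 * Dc + Dc * Mc0 = 0) (hMc0Db : Mc0 * Db + Db * Mc0 = 0)
    (hMcDc0 : Mc * Dc0 + Dc0 * Mc = 0) (hMcDb : Mc * Db + Db * Mc = 0)
    (hMbDc0 : Mb * Dc0 + Dc0 * Mb = 0) (hMbDc : Mb * Dc + Dc * Mb = 0)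
    (hDc0Dc : Dc0 * Dc + Dc * Dc0 = 0) (hDc0Db : Dc0 * Db + Db * Dc0 = 0)
    (hDcDb : Dc * Db + Db * Dc = 0)
    -- the composite operators
    (T1 T2 Nop hop Om : A)
    (hT1 : T1 = XdP + 2 * (Mc0 * Dc))
    (hT2 : T2 = T2e + 2 * (Db * Dc))
    (hN : Nop = PdP + Mb * Db + Mc * Dc)
    (hh : hop = -XdX - 2 * (Mc0 * Dc0) + Mb * Db - Mc * Dc)
    (hOm : Om = Mc0 * Box + Mc * S + Sd * Db + Mc * (Db * Dc0)) :
    Om * T2 - T2 * Om = 0 ∧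
    hop * T1 - T1 * hop = -T1 ∧
    hop * T2 - T2 * hop = 0 ∧
    Nop * T1 - T1 * Nop = -T1 ∧
    Nop * T2 - T2 * Nop = -(2 * T2) ∧
    T1 * T2 - T2 * T1 = 0 ∧
    Om * T1 - T1 * Om = -(Db * (hop + Nop - 2)) + Mc * T2 := by
  subst hT1 hT2 hN hh hOm
  have rge_Mc0_Box : Mc0 * Box = Box * Mc0 := hge Mc0 (by simp) Box (by simp)
  have rge_Mc0_S : Mc0 * S = S * Mc0 := hge Mc0 (by simp) S (by simp)
  have rge_Mc0_Sd : Mc0 * Sd = Sd * Mc0 := hge Mc0 (by simp) Sd (by simp)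
  have rge_Mc0_XdP : Mc0 * XdP = XdP * Mc0 := hge Mc0 (by simp) XdP (by simp)
  have rge_Mc0_PdP : Mc0 * PdP = PdP * Mc0 := hge Mc0 (by simp) PdP (by simp)
  have rge_Mc0_XdX : Mc0 * XdX = XdX * Mc0 := hge Mc0 (by simp) XdX (by simp)
  have rge_Mc0_T2e : Mc0 * T2e = T2e * Mc0 := hge Mc0 (by simp) T2e (by simp)
  have rge_Mc_Box : Mc * Box = Box * Mc := hge Mc (by simp) Box (by simp)
  have rge_Mc_S : Mc * S = S * Mc := hge Mc (by simp) S (by simp)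
  have rge_Mc_Sd : Mc * Sd = Sd * Mc := hge Mc (by simp) Sd (by simp)
  have rge_Mc_XdP : Mc * XdP = XdP * Mc := hge Mc (by simp) XdP (by simp)
  have rge_Mc_PdP : Mc * PdP = PdP * Mc := hge Mc (by simp) PdP (by simp)
  have rge_Mc_XdX : Mc * XdX = XdX * Mc := hge Mc (by simp) XdX (by simp)
  have rge_Mc_T2e : Mc * T2e = T2e * Mc := hge Mc (by simp) T2e (by simp)
  have rge_Mb_Box : Mb * Box = Box * Mb := hge Mb (by simp) Box (by simp)
  have rge_Mb_S : Mb * S = S * Mb := hge Mb (by simp) S (by simp)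
  have rge_Mb_Sd : Mb * Sd = Sd * Mb := hge Mb (by simp) Sd (by simp)
  have rge_Mb_XdP : Mb * XdP = XdP * Mb := hge Mb (by simp) XdP (by simp)
  have rge_Mb_PdP : Mb * PdP = PdP * Mb := hge Mb (by simp) PdP (by simp)
  have rge_Mb_XdX : Mb * XdX = XdX * Mb := hge Mb (by simp) XdX (by simp)
  have rge_Mb_T2e : Mb * T2e = T2e * Mb := hge Mb (by simp) T2e (by simp)
  have rge_Dc0_Box : Dc0 * Box = Box * Dc0 := hge Dc0 (by simp) Box (by simp)
  have rge_Dc0_S : Dc0 * S = S * Dc0 := hge Dc0 (by simp) S (by simp)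
  have rge_Dc0_Sd : Dc0 * Sd = Sd * Dc0 := hge Dc0 (by simp) Sd (by simp)
  have rge_Dc0_XdP : Dc0 * XdP = XdP * Dc0 := hge Dc0 (by simp) XdP (by simp)
  have rge_Dc0_PdP : Dc0 * PdP = PdP * Dc0 := hge Dc0 (by simp) PdP (by simp)
  have rge_Dc0_XdX : Dc0 * XdX = XdX * Dc0 := hge Dc0 (by simp) XdX (by simp)
  have rge_Dc0_T2e : Dc0 * T2e = T2e * Dc0 := hge Dc0 (by simp) T2e (by simp)
  have rge_Dc_Box : Dc * Box = Box * Dc := hge Dc (by simp) Box (by simp)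
  have rge_Dc_S : Dc * S = S * Dc := hge Dc (by simp) S (by simp)
  have rge_Dc_Sd : Dc * Sd = Sd * Dc := hge Dc (by simp) Sd (by simp)
  have rge_Dc_XdP : Dc * XdP = XdP * Dc := hge Dc (by simp) XdP (by simp)
  have rge_Dc_PdP : Dc * PdP = PdP * Dc := hge Dc (by simp) PdP (by simp)
  have rge_Dc_XdX : Dc * XdX = XdX * Dc := hge Dc (by simp) XdX (by simp)
  have rge_Dc_T2e : Dc * T2e = T2e * Dc := hge Dc (by simp) T2e (by simp)
  have rge_Db_Box : Db * Box = Box * Db := hge Db (by simp) Box (by simp)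
  have rge_Db_S : Db * S = S * Db := hge Db (by simp) S (by simp)
  have rge_Db_Sd : Db * Sd = Sd * Db := hge Db (by simp) Sd (by simp)
  have rge_Db_XdP : Db * XdP = XdP * Db := hge Db (by simp) XdP (by simp)
  have rge_Db_PdP : Db * PdP = PdP * Db := hge Db (by simp) PdP (by simp)
  have rge_Db_XdX : Db * XdX = XdX * Db := hge Db (by simp) XdX (by simp)
  have rge_Db_T2e : Db * T2e = T2e * Db := hge Db (by simp) T2e (by simp)
  have r_S_Box := hBoxS.symm
  have r_Sd_Box := hBoxSd.symm
  have r_XdP_Box := sw_sub hBoxXdP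
  have r_XdX_Box := sw_sub hBoxXdX
  have r_PdP_Box := hBoxPdP.symm
  have r_T2e_Box := hBoxT2e.symm
  have r_Sd_S := sw_sub hSSd
  have r_XdP_S := sw_sub hSXdP
  have r_XdP_Sd := sw_sub hSdXdP
  have r_XdX_S := addform hXdXS
  have r_XdX_Sd := addform hXdXSd
  have r_XdX_XdP := addform hXdXXdP
  have r_T2e_XdX := hXdXT2e.symm
  have r_XdX_PdP := hXdXPdP
  have r_PdP_S := addform hPdPS
  have r_PdP_Sd := addform hPdPSd
  have r_PdP_XdP := addform hPdPXdP
  have r_T2e_PdP := sw_sub hPdPT2e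
  have r_T2e_S := hST2e.symm
  have r_T2e_Sd := sw_sub hSdT2e
  have r_T2e_XdP := hXdPT2e.symm
  have r_Mc_Mc0 := sw_neg hMc0Mc
  have r_Mb_Mc0 := sw_neg hMc0Mb
  have r_Mb_Mc := sw_neg hMcMb
  have r_Dc0_Mc0 := sw_one hMc0Dc0
  have r_Dc0_Mc := sw_neg hMcDc0
  have r_Dc0_Mb := sw_neg hMbDc0
  have r_Dc_Mc0 := sw_neg hMc0Dc
  have r_Dc_Mc := sw_one hMcDc
  have r_Dc_Mb := sw_neg hMbDc
  have r_Dc_Dc0 := sw_neg hDc0Dc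
  have r_Db_Mc0 := sw_neg hMc0Db
  have r_Db_Mc := sw_neg hMcDb
  have r_Db_Mb := sw_one hMbDb
  have r_Db_Dc0 := sw_neg hDc0Db
  have r_Db_Dc := sw_neg hDcDb
  refine ⟨?_, ?_, ?_, ?_, ?_, ?_, ?_⟩ <;>
  (simp only [mul_add, add_mul, mul_sub, sub_mul, neg_mul, mul_neg, mul_assoc, smul2, neg_neg, mul_one, one_mul, mul_zero, zero_mul, zero_add, add_zero, sub_zero, neg_zero, rge_Mc0_Box, rge_Mc0_S, rge_Mc0_Sd, rge_Mc0_XdP, rge_Mc0_PdP, rge_Mc0_XdX, rge_Mc0_T2e, rge_Mc_Box, rge_Mc_S, rge_Mc_Sd, rge_Mc_XdP, rge_Mc_PdP, rge_Mc_XdX, rge_Mc_T2e, rge_Mb_Box, rge_Mb_S, rge_Mb_Sd, rge_Mb_XdP, rge_Mb_PdP, rge_Mb_XdX, rge_Mb_T2e, rge_Dc0_Box, rge_Dc0_S, rge_Dc0_Sd, rge_Dc0_XdP, rge_Dc0_PdP, rge_Dc0_XdX, rge_Dc0_T2e, rge_Dc_Box, rge_Dc_S, rge_Dc_Sd, rge_Dc_XdP,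 rge_Dc_PdP, rge_Dc_XdX, rge_Dc_T2e, rge_Db_Box, rge_Db_S, rge_Db_Sd, rge_Db_XdP, rge_Db_PdP, rge_Db_XdX, rge_Db_T2e, r_S_Box, r_Sd_Box, r_XdP_Box, r_XdX_Box, r_PdP_Box, r_T2e_Box, r_Sd_S, r_XdP_S, r_XdP_Sd, r_XdX_S, r_XdX_Sd, r_XdX_XdP, r_T2e_XdX, r_XdX_PdP, r_PdP_S, r_PdP_Sd, r_PdP_XdP, r_T2e_PdP, r_T2e_S, r_T2e_Sd, r_T2e_XdP, r_Mc_Mc0, r_Mb_Mc0, r_Mb_Mc, r_Dc0_Mc0, r_Dc0_Mc, r_Dc0_Mb, r_Dc_Mc0, r_Dc_Mc, r_Dc_Mb, r_Dc_Dc0, r_Db_Mc0, r_Db_Mc, r_Db_Mb, r_Db_Dc0, r_Db_Dc, hMc0sq, hMcsq, hMbsq, hDc0sq, hDcsq, hDbsq, m3 rge_Mc0_Box, m3 rge_Mc0_S, m3 rge_Mc0_Sd, m3 rge_Mc0_XdP, m3 rge_Mc0_PdP, m3 rge_Mc0_XdX, m3 rge_Mc0_T2e, m3 rge_Mc_Box,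 m3 rge_Mc_S, m3 rge_Mc_Sd, m3 rge_Mc_XdP, m3 rge_Mc_PdP, m3 rge_Mc_XdX, m3 rge_Mc_T2e, m3 rge_Mb_Box, m3 rge_Mb_S, m3 rge_Mb_Sd, m3 rge_Mb_XdP, m3 rge_Mb_PdP, m3 rge_Mb_XdX, m3 rge_Mb_T2e, m3 rge_Dc0_Box, m3 rge_Dc0_S, m3 rge_Dc0_Sd, m3 rge_Dc0_XdP, m3 rge_Dc0_PdP, m3 rge_Dc0_XdX, m3 rge_Dc0_T2e, m3 rge_Dc_Box, m3 rge_Dc_S, m3 rge_Dc_Sd, m3 rge_Dc_XdP, m3 rge_Dc_PdP, m3 rge_Dc_XdX, m3 rge_Dc_T2e, m3 rge_Db_Box, m3 rge_Db_S, m3 rge_Db_Sd, m3 rge_Db_XdP, m3 rge_Db_PdP, m3 rge_Db_XdX, m3 rge_Db_T2e, m3 r_S_Box, m3 r_Sd_Box, m3 r_XdP_Box, m3 r_XdX_Box, m3 r_PdP_Box, m3 r_T2e_Box, m3 r_Sd_S, m3 r_XdP_S, m3 r_XdP_Sd, m3 r_XdX_S, m3 r_XdX_Sd, m3 r_XdX_XdP,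 m3 r_T2e_XdX, m3 r_XdX_PdP, m3 r_PdP_S, m3 r_PdP_Sd, m3 r_PdP_XdP, m3 r_T2e_PdP, m3 r_T2e_S, m3 r_T2e_Sd, m3 r_T2e_XdP, m3 r_Mc_Mc0, m3 r_Mb_Mc0, m3 r_Mb_Mc, m3 r_Dc0_Mc0, m3 r_Dc0_Mc, m3 r_Dc0_Mb, m3 r_Dc_Mc0, m3 r_Dc_Mc, m3 r_Dc_Mb, m3 r_Dc_Dc0, m3 r_Db_Mc0, m3 r_Db_Mc, m3 r_Db_Mb, m3 r_Db_Dc0, m3 r_Db_Dc, sq3 hMc0sq, sq3 hMcsq, sq3 hMbsq, sq3 hDc0sq, sq3 hDcsq, sq3 hDbsq]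
   noncomm_ring)
end

section
/- With Ω, T₁, T₂, h, N as above: if Φ satisfies (h+N−t−1)Φ = 0 and T₂Φ = 0, then [Ω, (T₁)^t]Φ = 0 for every positive integer t. -/
section StmtAux
variable {R : Type*} [Ring R]

theorem liftE {a b c : R} (h : a * b = c) (x : R) : a * (b * x) = c * x := by
  rw [← mul_assoc, h]

theorem antiE {a b : R} (h : a * b + b * a = 0) : b * a = -(a * b) := by
  rw [eq_neg_iff_add_eq_zero, add_comm]; exact h

theorem unitE {a b : R} (h : a * b + b * a = 1) : b * a = 1 - a * b := by
  rw [eq_sub_iff_add_eq, add_comm]; exact h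

theorem flipE {a b c : R} (h : a * b - b * a = c) : b * a = a * b - c := by
  rw [← h]; abel

end StmtAux
set_option maxHeartbeats 4000000 in
/-- With `Ω = c₀□ + cS + S†∂_b + c∂_b∂_{c₀}`,
`T₁ = X·∂_P + 2c₀∂_c`, `T₂ = ∂_P·∂_P + 2∂_b∂_c`, `h`, `N` as in Statement 14 (realized
here as endomorphisms of the space `M` of ghost-extended ambient fields, subject to
their standard (anti)commutation relations): if a field `Φ` satisfies
`(h + N − t − 1)Φ = 0` and `T₂Φ = 0`, then `[Ω, (T₁)^t]Φ = 0` for every integer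
`t ≥ 1`. -/
theorem stmt15 {M : Type*} [AddCommGroup M] [Module ℝ M]
    (Box S Sd XdP PdP XdX T2e Mc0 Mc Mb Dc0 Dc Db : Module.End ℝ M)
    (hBoxS : Box * S = S * Box)
    (hBoxSd : Box * Sd = Sd * Box)
    (hBoxXdP : Box * XdP - XdP * Box = 2 * S)
    (hBoxXdX : Box * XdX - XdX * Box = 2 * Box)
    (hBoxPdP : Box * PdP = PdP * Box)
    (hBoxT2e : Box * T2e = T2e * Box)
    (hSSd : S * Sd - Sd * S = -Box)
    (hSXdP : S * XdP - XdP * S = T2e)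
    (hSdXdP : Sd * XdP - XdP * Sd = XdX - PdP)
    (hXdXS : XdX * S - S * XdX = -S)
    (hXdXSd : XdX * Sd - Sd * XdX = -Sd)
    (hXdXXdP : XdX * XdP - XdP * XdX = XdP)
    (hXdXT2e : XdX * T2e = T2e * XdX)
    (hXdXPdP : XdX * PdP = PdP * XdX)
    (hPdPS : PdP * S - S * PdP = -S)
    (hPdPSd : PdP * Sd - Sd * PdP = Sd)
    (hPdPXdP : PdP * XdP - XdP * PdP = -XdP)
    (hPdPT2e : PdP * T2e - T2e * PdP = -(2 * T2e))
    (hST2e : S * T2e = T2e * S)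
    (hSdT2e : Sd * T2e - T2e * Sd = 2 * S)
    (hXdPT2e : XdP * T2e = T2e * XdP)
    (hge : ∀ g ∈ ([Mc0, Mc, Mb, Dc0, Dc, Db] : List (Module.End ℝ M)),
      ∀ e ∈ ([Box, S, Sd, XdP, PdP, XdX, T2e] : List (Module.End ℝ M)), g * e = e * g)
    (hMc0sq : Mc0 * Mc0 = 0) (hMcsq : Mc * Mc = 0) (hMbsq : Mb * Mb = 0)
    (hDc0sq : Dc0 * Dc0 = 0) (hDcsq : Dc * Dc = 0) (hDbsq : Db * Db = 0)
    (hMc0Dc0 : Mc0 * Dc0 + Dc0 * Mc0 = 1)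
    (hMcDc : Mc * Dc + Dc * Mc = 1)
    (hMbDb : Mb * Db + Db * Mb = 1)
    (hMc0Mc : Mc0 * Mc + Mc * Mc0 = 0) (hMc0Mb : Mc0 * Mb + Mb * Mc0 = 0)
    (hMcMb : Mc * Mb + Mb * Mc = 0)
    (hMc0Dc : Mc0 * Dc + Dc * Mc0 = 0) (hMc0Db : Mc0 * Db + Db * Mc0 = 0)
    (hMcDc0 : Mc * Dc0 + Dc0 * Mc = 0) (hMcDb : Mc * Db + Db * Mc = 0)
    (hMbDc0 : Mb * Dc0 + Dc0 * Mb = 0) (hMbDc : Mb * Dc + Dc * Mb = 0)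
    (hDc0Dc : Dc0 * Dc + Dc * Dc0 = 0) (hDc0Db : Dc0 * Db + Db * Dc0 = 0)
    (hDcDb : Dc * Db + Db * Dc = 0)
    (T1 T2 Nop hop Om : Module.End ℝ M)
    (hT1 : T1 = XdP + 2 * (Mc0 * Dc))
    (hT2 : T2 = T2e + 2 * (Db * Dc))
    (hN : Nop = PdP + Mb * Db + Mc * Dc)
    (hh : hop = -XdX - 2 * (Mc0 * Dc0) + Mb * Db - Mc * Dc)
    (hOm : Om = Mc0 * Box + Mc * S + Sd * Db + Mc * (Db * Dc0))
    (t : ℕ) (ht : 1 ≤ t) (Φ : M)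
    (hΦ1 : hop Φ + Nop Φ - ((t : ℝ) + 1) • Φ = 0)
    (hΦ2 : T2 Φ = 0) :
    (Om * T1 ^ t - T1 ^ t * Om) Φ = 0 := by
  have cMc0Box : Box * Mc0 = Mc0 * Box := (hge Mc0 (by simp) Box (by simp)).symm
  have cMc0S : S * Mc0 = Mc0 * S := (hge Mc0 (by simp) S (by simp)).symm
  have cMc0Sd : Sd * Mc0 = Mc0 * Sd := (hge Mc0 (by simp) Sd (by simp)).symm
  have cMc0XdP : XdP * Mc0 = Mc0 * XdP := (hge Mc0 (by simp) XdP (by simp)).symm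
  have cMc0PdP : PdP * Mc0 = Mc0 * PdP := (hge Mc0 (by simp) PdP (by simp)).symm
  have cMc0XdX : XdX * Mc0 = Mc0 * XdX := (hge Mc0 (by simp) XdX (by simp)).symm
  have cMc0T2e : T2e * Mc0 = Mc0 * T2e := (hge Mc0 (by simp) T2e (by simp)).symm
  have cMcBox : Box * Mc = Mc * Box := (hge Mc (by simp) Box (by simp)).symm
  have cMcS : S * Mc = Mc * S := (hge Mc (by simp) S (by simp)).symm
  have cMcSd : Sd * Mc = Mc * Sd := (hge Mc (by simp) Sd (by simp)).symm
  have cMcXdP : XdP * Mc = Mc * XdP := (hge Mc (by simp) XdP (by simp)).symm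
  have cMcPdP : PdP * Mc = Mc * PdP := (hge Mc (by simp) PdP (by simp)).symm
  have cMcXdX : XdX * Mc = Mc * XdX := (hge Mc (by simp) XdX (by simp)).symm
  have cMcT2e : T2e * Mc = Mc * T2e := (hge Mc (by simp) T2e (by simp)).symm
  have cMbBox : Box * Mb = Mb * Box := (hge Mb (by simp) Box (by simp)).symm
  have cMbS : S * Mb = Mb * S := (hge Mb (by simp) S (by simp)).symm
  have cMbSd : Sd * Mb = Mb * Sd := (hge Mb (by simp) Sd (by simp)).symm
  have cMbXdP : XdP * Mb = Mb * XdP := (hge Mb (by simp) XdP (by simp)).symm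
  have cMbPdP : PdP * Mb = Mb * PdP := (hge Mb (by simp) PdP (by simp)).symm
  have cMbXdX : XdX * Mb = Mb * XdX := (hge Mb (by simp) XdX (by simp)).symm
  have cMbT2e : T2e * Mb = Mb * T2e := (hge Mb (by simp) T2e (by simp)).symm
  have cDc0Box : Box * Dc0 = Dc0 * Box := (hge Dc0 (by simp) Box (by simp)).symm
  have cDc0S : S * Dc0 = Dc0 * S := (hge Dc0 (by simp) S (by simp)).symm
  have cDc0Sd : Sd * Dc0 = Dc0 * Sd := (hge Dc0 (by simp) Sd (by simp)).symm
  have cDc0XdP : XdP * Dc0 = Dc0 * XdP := (hge Dc0 (by simp) XdP (by simp)).symm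
  have cDc0PdP : PdP * Dc0 = Dc0 * PdP := (hge Dc0 (by simp) PdP (by simp)).symm
  have cDc0XdX : XdX * Dc0 = Dc0 * XdX := (hge Dc0 (by simp) XdX (by simp)).symm
  have cDc0T2e : T2e * Dc0 = Dc0 * T2e := (hge Dc0 (by simp) T2e (by simp)).symm
  have cDcBox : Box * Dc = Dc * Box := (hge Dc (by simp) Box (by simp)).symm
  have cDcS : S * Dc = Dc * S := (hge Dc (by simp) S (by simp)).symm
  have cDcSd : Sd * Dc = Dc * Sd := (hge Dc (by simp) Sd (by simp)).symm
  have cDcXdP : XdP * Dc = Dc * XdP := (hge Dc (by simp) XdP (by simp)).symm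
  have cDcPdP : PdP * Dc = Dc * PdP := (hge Dc (by simp) PdP (by simp)).symm
  have cDcXdX : XdX * Dc = Dc * XdX := (hge Dc (by simp) XdX (by simp)).symm
  have cDcT2e : T2e * Dc = Dc * T2e := (hge Dc (by simp) T2e (by simp)).symm
  have cDbBox : Box * Db = Db * Box := (hge Db (by simp) Box (by simp)).symm
  have cDbS : S * Db = Db * S := (hge Db (by simp) S (by simp)).symm
  have cDbSd : Sd * Db = Db * Sd := (hge Db (by simp) Sd (by simp)).symm
  have cDbXdP : XdP * Db = Db * XdP := (hge Db (by simp) XdP (by simp)).symm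
  have cDbPdP : PdP * Db = Db * PdP := (hge Db (by simp) PdP (by simp)).symm
  have cDbXdX : XdX * Db = Db * XdX := (hge Db (by simp) XdX (by simp)).symm
  have cDbT2e : T2e * Db = Db * T2e := (hge Db (by simp) T2e (by simp)).symm
  have rBoxXdP := eq_add_of_sub_eq hBoxXdP
  have rBoxXdX := eq_add_of_sub_eq hBoxXdX
  have rSSd := eq_add_of_sub_eq hSSd
  have rSXdP := eq_add_of_sub_eq hSXdP
  have rSdXdP := eq_add_of_sub_eq hSdXdP
  have rXdXXdP := eq_add_of_sub_eq hXdXXdP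
  have rPdPXdP := eq_add_of_sub_eq hPdPXdP
  have rSdT2e := eq_add_of_sub_eq hSdT2e
  have rSXdX := flipE hXdXS
  have rSdXdX := flipE hXdXSd
  have rSPdP := flipE hPdPS
  have rSdPdP := flipE hPdPSd
  have rT2ePdP := flipE hPdPT2e
  have rBoxS := hBoxS
  have rBoxSd := hBoxSd
  have rBoxPdP := hBoxPdP
  have rBoxT2e := hBoxT2e
  have rST2e := hST2e
  have rT2eXdX := hXdXT2e.symm
  have rPdPXdX := hXdXPdP.symm
  have rT2eXdP := hXdPT2e.symm
  have gMcMc0 := antiE hMc0Mc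
  have gMbMc0 := antiE hMc0Mb
  have gMbMc := antiE hMcMb
  have gDc0Mc0 := unitE hMc0Dc0
  have gDc0Mc := antiE hMcDc0
  have gDc0Mb := antiE hMbDc0
  have gDcMc0 := antiE hMc0Dc
  have gDcMc := unitE hMcDc
  have gDcMb := antiE hMbDc
  have gDcDc0 := antiE hDc0Dc
  have gDbMc0 := antiE hMc0Db
  have gDbMc := antiE hMcDb
  have gDbMb := unitE hMbDb
  have gDbDc0 := antiE hDc0Db
  have gDbDc := antiE hDcDb
  -- key operator identities
  have L1 : Om * T1 - T1 * Om = Mc * T2 - (hop + Nop) * Db := by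
    subst hOm hT1 hT2 hN hh
    simp only [two_mul, mul_add, add_mul, mul_sub, sub_mul, mul_neg, neg_mul, neg_neg, sub_neg_eq_add, mul_one, one_mul, mul_zero, zero_mul, zero_add, add_zero, neg_zero, sub_zero, mul_assoc, cMc0Box, cMc0S, cMc0Sd, cMc0XdP, cMc0PdP, cMc0XdX, cMc0T2e, cMcBox, cMcS, cMcSd, cMcXdP, cMcPdP, cMcXdX, cMcT2e, cMbBox, cMbS, cMbSd, cMbXdP, cMbPdP, cMbXdX, cMbT2e, cDc0Box, cDc0S, cDc0Sd, cDc0XdP, cDc0PdP, cDc0XdX, cDc0T2e, cDcBox, cDcS, cDcSd, cDcXdP, cDcPdP, cDcXdX, cDcT2e, cDbBox, cDbS, cDbSd, cDbXdP, cDbPdP, cDbXdX, cDbT2e, rBoxXdP, rBoxXdX, rSSd, rSXdP, rSdXdP, rXdXXdP, rPdPXdP, rSdT2e, rSXdX, rSdXdX, rSPdP, rSdPdP, rT2ePdP, rBoxS, rBoxSd, rBoxPdP, rBoxT2e, rST2e, rT2eXdX, rPdPXdX, rT2eXdP, gMcMc0, gMbMc0, gMbMc, gDc0Mc0, gDc0Mc,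 gDc0Mb, gDcMc0, gDcMc, gDcMb, gDcDc0, gDbMc0, gDbMc, gDbMb, gDbDc0, gDbDc, hMc0sq, hMcsq, hMbsq, hDc0sq, hDcsq, hDbsq, liftE cMc0Box, liftE cMc0S, liftE cMc0Sd, liftE cMc0XdP, liftE cMc0PdP, liftE cMc0XdX, liftE cMc0T2e, liftE cMcBox, liftE cMcS, liftE cMcSd, liftE cMcXdP, liftE cMcPdP, liftE cMcXdX, liftE cMcT2e, liftE cMbBox, liftE cMbS, liftE cMbSd, liftE cMbXdP, liftE cMbPdP, liftE cMbXdX, liftE cMbT2e, liftE cDc0Box, liftE cDc0S, liftE cDc0Sd, liftE cDc0XdP, liftE cDc0PdP, liftE cDc0XdX, liftE cDc0T2e, liftE cDcBox, liftE cDcS, liftE cDcSd, liftE cDcXdP, liftE cDcPdP, liftE cDcXdX, liftE cDcT2e, liftE cDbBox, liftE cDbS, liftE cDbSd, liftE cDbXdP, liftE cDbPdP, liftE cDbXdX, liftE cDbT2e, liftE rBoxXdP, liftE rBoxXdX, liftE rSSd, liftE rSXdP, liftE rSdXdP, liftE rXdXXdP, liftE rPdPXdP, liftE rSdT2e, liftE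 rSXdX, liftE rSdXdX, liftE rSPdP, liftE rSdPdP, liftE rT2ePdP, liftE rBoxS, liftE rBoxSd, liftE rBoxPdP, liftE rBoxT2e, liftE rST2e, liftE rT2eXdX, liftE rPdPXdX, liftE rT2eXdP, liftE gMcMc0, liftE gMbMc0, liftE gMbMc, liftE gDc0Mc0, liftE gDc0Mc, liftE gDc0Mb, liftE gDcMc0, liftE gDcMc, liftE gDcMb, liftE gDcDc0, liftE gDbMc0, liftE gDbMc, liftE gDbMb, liftE gDbDc0, liftE gDbDc, liftE hMc0sq, liftE hMcsq, liftE hMbsq, liftE hDc0sq, liftE hDcsq, liftE hDbsq]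
    try abel
  have L2 : T2 * T1 = T1 * T2 := by
    subst hT1 hT2
    simp only [two_mul, mul_add, add_mul, mul_sub, sub_mul, mul_neg, neg_mul, neg_neg, sub_neg_eq_add, mul_one, one_mul, mul_zero, zero_mul, zero_add, add_zero, neg_zero, sub_zero, mul_assoc, cMc0Box, cMc0S, cMc0Sd, cMc0XdP, cMc0PdP, cMc0XdX, cMc0T2e, cMcBox, cMcS, cMcSd, cMcXdP, cMcPdP, cMcXdX, cMcT2e, cMbBox, cMbS, cMbSd, cMbXdP, cMbPdP, cMbXdX, cMbT2e, cDc0Box, cDc0S, cDc0Sd, cDc0XdP, cDc0PdP, cDc0XdX, cDc0T2e, cDcBox, cDcS, cDcSd, cDcXdP, cDcPdP, cDcXdX, cDcT2e, cDbBox, cDbS, cDbSd, cDbXdP, cDbPdP, cDbXdX, cDbT2e, rBoxXdP, rBoxXdX, rSSd, rSXdP, rSdXdP, rXdXXdP, rPdPXdP, rSdT2e, rSXdX, rSdXdX, rSPdP, rSdPdP, rT2ePdP, rBoxS, rBoxSd, rBoxPdP, rBoxT2e, rST2e, rT2eXdX, rPdPXdX, rT2eXdP, gMcMc0, gMbMc0,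 gMbMc, gDc0Mc0, gDc0Mc, gDc0Mb, gDcMc0, gDcMc, gDcMb, gDcDc0, gDbMc0, gDbMc, gDbMb, gDbDc0, gDbDc, hMc0sq, hMcsq, hMbsq, hDc0sq, hDcsq, hDbsq, liftE cMc0Box, liftE cMc0S, liftE cMc0Sd, liftE cMc0XdP, liftE cMc0PdP, liftE cMc0XdX, liftE cMc0T2e, liftE cMcBox, liftE cMcS, liftE cMcSd, liftE cMcXdP, liftE cMcPdP, liftE cMcXdX, liftE cMcT2e, liftE cMbBox, liftE cMbS, liftE cMbSd, liftE cMbXdP, liftE cMbPdP, liftE cMbXdX, liftE cMbT2e, liftE cDc0Box, liftE cDc0S, liftE cDc0Sd, liftE cDc0XdP, liftE cDc0PdP, liftE cDc0XdX, liftE cDc0T2e, liftE cDcBox, liftE cDcS, liftE cDcSd, liftE cDcXdP, liftE cDcPdP, liftE cDcXdX, liftE cDcT2e, liftE cDbBox, liftE cDbS, liftE cDbSd, liftE cDbXdP, liftE cDbPdP, liftE cDbXdX, liftE cDbT2e, liftE rBoxXdP, liftE rBoxXdX, liftE rSSd, liftE rSXdP, liftE rSdXdP, liftE rXdXXdP,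 liftE rPdPXdP, liftE rSdT2e, liftE rSXdX, liftE rSdXdX, liftE rSPdP, liftE rSdPdP, liftE rT2ePdP, liftE rBoxS, liftE rBoxSd, liftE rBoxPdP, liftE rBoxT2e, liftE rST2e, liftE rT2eXdX, liftE rPdPXdX, liftE rT2eXdP, liftE gMcMc0, liftE gMbMc0, liftE gMbMc, liftE gDc0Mc0, liftE gDc0Mc, liftE gDc0Mb, liftE gDcMc0, liftE gDcMc, liftE gDcMb, liftE gDcDc0, liftE gDbMc0, liftE gDbMc, liftE gDbMb, liftE gDbDc0, liftE gDbDc, liftE hMc0sq, liftE hMcsq, liftE hMbsq, liftE hDc0sq, liftE hDcsq, liftE hDbsq]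
    try abel
  have L3 : Db * T1 = T1 * Db := by
    subst hT1
    simp only [two_mul, mul_add, add_mul, mul_sub, sub_mul, mul_neg, neg_mul, neg_neg, sub_neg_eq_add, mul_one, one_mul, mul_zero, zero_mul, zero_add, add_zero, neg_zero, sub_zero, mul_assoc, cMc0Box, cMc0S, cMc0Sd, cMc0XdP, cMc0PdP, cMc0XdX, cMc0T2e, cMcBox, cMcS, cMcSd, cMcXdP, cMcPdP, cMcXdX, cMcT2e, cMbBox, cMbS, cMbSd, cMbXdP, cMbPdP, cMbXdX, cMbT2e, cDc0Box, cDc0S, cDc0Sd, cDc0XdP, cDc0PdP, cDc0XdX, cDc0T2e, cDcBox, cDcS, cDcSd, cDcXdP, cDcPdP, cDcXdX, cDcT2e, cDbBox, cDbS, cDbSd, cDbXdP, cDbPdP, cDbXdX, cDbT2e, rBoxXdP, rBoxXdX, rSSd, rSXdP, rSdXdP, rXdXXdP, rPdPXdP, rSdT2e, rSXdX, rSdXdX, rSPdP, rSdPdP, rT2ePdP, rBoxS, rBoxSd, rBoxPdP, rBoxT2e, rST2e, rT2eXdX, rPdPXdX, rT2eXdP, gMcMc0, gMbMc0, gMbMc,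 gDc0Mc0, gDc0Mc, gDc0Mb, gDcMc0, gDcMc, gDcMb, gDcDc0, gDbMc0, gDbMc, gDbMb, gDbDc0, gDbDc, hMc0sq, hMcsq, hMbsq, hDc0sq, hDcsq, hDbsq, liftE cMc0Box, liftE cMc0S, liftE cMc0Sd, liftE cMc0XdP, liftE cMc0PdP, liftE cMc0XdX, liftE cMc0T2e, liftE cMcBox, liftE cMcS, liftE cMcSd, liftE cMcXdP, liftE cMcPdP, liftE cMcXdX, liftE cMcT2e, liftE cMbBox, liftE cMbS, liftE cMbSd, liftE cMbXdP, liftE cMbPdP, liftE cMbXdX, liftE cMbT2e, liftE cDc0Box, liftE cDc0S, liftE cDc0Sd, liftE cDc0XdP, liftE cDc0PdP, liftE cDc0XdX, liftE cDc0T2e, liftE cDcBox, liftE cDcS, liftE cDcSd, liftE cDcXdP, liftE cDcPdP, liftE cDcXdX, liftE cDcT2e, liftE cDbBox, liftE cDbS, liftE cDbSd, liftE cDbXdP, liftE cDbPdP, liftE cDbXdX, liftE cDbT2e, liftE rBoxXdP, liftE rBoxXdX, liftE rSSd, liftE rSXdP, liftE rSdXdP, liftE rXdXXdP, liftE rPdPXdP,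 liftE rSdT2e, liftE rSXdX, liftE rSdXdX, liftE rSPdP, liftE rSdPdP, liftE rT2ePdP, liftE rBoxS, liftE rBoxSd, liftE rBoxPdP, liftE rBoxT2e, liftE rST2e, liftE rT2eXdX, liftE rPdPXdX, liftE rT2eXdP, liftE gMcMc0, liftE gMbMc0, liftE gMbMc, liftE gDc0Mc0, liftE gDc0Mc, liftE gDc0Mb, liftE gDcMc0, liftE gDcMc, liftE gDcMb, liftE gDcDc0, liftE gDbMc0, liftE gDbMc, liftE gDbMb, liftE gDbDc0, liftE gDbDc, liftE hMc0sq, liftE hMcsq, liftE hMbsq, liftE hDc0sq, liftE hDcsq, liftE hDbsq]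
    try abel
  have L4 : (hop + Nop) * T1 = T1 * (hop + Nop) - (T1 + T1) := by
    subst hT1 hN hh
    simp only [two_mul, mul_add, add_mul, mul_sub, sub_mul, mul_neg, neg_mul, neg_neg, sub_neg_eq_add, mul_one, one_mul, mul_zero, zero_mul, zero_add, add_zero, neg_zero, sub_zero, mul_assoc, cMc0Box, cMc0S, cMc0Sd, cMc0XdP, cMc0PdP, cMc0XdX, cMc0T2e, cMcBox, cMcS, cMcSd, cMcXdP, cMcPdP, cMcXdX, cMcT2e, cMbBox, cMbS, cMbSd, cMbXdP, cMbPdP, cMbXdX, cMbT2e, cDc0Box, cDc0S, cDc0Sd, cDc0XdP, cDc0PdP, cDc0XdX, cDc0T2e, cDcBox, cDcS, cDcSd, cDcXdP, cDcPdP, cDcXdX, cDcT2e, cDbBox, cDbS, cDbSd, cDbXdP, cDbPdP, cDbXdX, cDbT2e, rBoxXdP, rBoxXdX, rSSd, rSXdP, rSdXdP, rXdXXdP, rPdPXdP, rSdT2e, rSXdX, rSdXdX, rSPdP, rSdPdP, rT2ePdP, rBoxS, rBoxSd, rBoxPdP, rBoxT2e, rST2e, rT2eXdX, rPdPXdX,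 rT2eXdP, gMcMc0, gMbMc0, gMbMc, gDc0Mc0, gDc0Mc, gDc0Mb, gDcMc0, gDcMc, gDcMb, gDcDc0, gDbMc0, gDbMc, gDbMb, gDbDc0, gDbDc, hMc0sq, hMcsq, hMbsq, hDc0sq, hDcsq, hDbsq, liftE cMc0Box, liftE cMc0S, liftE cMc0Sd, liftE cMc0XdP, liftE cMc0PdP, liftE cMc0XdX, liftE cMc0T2e, liftE cMcBox, liftE cMcS, liftE cMcSd, liftE cMcXdP, liftE cMcPdP, liftE cMcXdX, liftE cMcT2e, liftE cMbBox, liftE cMbS, liftE cMbSd, liftE cMbXdP, liftE cMbPdP, liftE cMbXdX, liftE cMbT2e, liftE cDc0Box, liftE cDc0S, liftE cDc0Sd, liftE cDc0XdP, liftE cDc0PdP, liftE cDc0XdX, liftE cDc0T2e, liftE cDcBox, liftE cDcS, liftE cDcSd, liftE cDcXdP, liftE cDcPdP, liftE cDcXdX, liftE cDcT2e, liftE cDbBox, liftE cDbS, liftE cDbSd, liftE cDbXdP, liftE cDbPdP, liftE cDbXdX, liftE cDbT2e, liftE rBoxXdP, liftE rBoxXdX, liftE rSSd, liftE rSXdP,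 liftE rSdXdP, liftE rXdXXdP, liftE rPdPXdP, liftE rSdT2e, liftE rSXdX, liftE rSdXdX, liftE rSPdP, liftE rSdPdP, liftE rT2ePdP, liftE rBoxS, liftE rBoxSd, liftE rBoxPdP, liftE rBoxT2e, liftE rST2e, liftE rT2eXdX, liftE rPdPXdX, liftE rT2eXdP, liftE gMcMc0, liftE gMbMc0, liftE gMbMc, liftE gDc0Mc0, liftE gDc0Mc, liftE gDc0Mb, liftE gDcMc0, liftE gDcMc, liftE gDcMb, liftE gDcDc0, liftE gDbMc0, liftE gDbMc, liftE gDbMb, liftE gDbDc0, liftE gDbDc, liftE hMc0sq, liftE hMcsq, liftE hMbsq, liftE hDc0sq, liftE hDcsq, liftE hDbsq]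
    try abel
  have L5 : (hop + Nop) * Db = Db * (hop + Nop) - (Db + Db) := by
    subst hN hh
    simp only [two_mul, mul_add, add_mul, mul_sub, sub_mul, mul_neg, neg_mul, neg_neg, sub_neg_eq_add, mul_one, one_mul, mul_zero, zero_mul, zero_add, add_zero, neg_zero, sub_zero, mul_assoc, cMc0Box, cMc0S, cMc0Sd, cMc0XdP, cMc0PdP, cMc0XdX, cMc0T2e, cMcBox, cMcS, cMcSd, cMcXdP, cMcPdP, cMcXdX, cMcT2e, cMbBox, cMbS, cMbSd, cMbXdP, cMbPdP, cMbXdX, cMbT2e, cDc0Box, cDc0S, cDc0Sd, cDc0XdP, cDc0PdP, cDc0XdX, cDc0T2e, cDcBox, cDcS, cDcSd, cDcXdP, cDcPdP, cDcXdX, cDcT2e, cDbBox, cDbS, cDbSd, cDbXdP, cDbPdP, cDbXdX, cDbT2e, rBoxXdP, rBoxXdX, rSSd, rSXdP, rSdXdP, rXdXXdP, rPdPXdP, rSdT2e, rSXdX, rSdXdX, rSPdP, rSdPdP, rT2ePdP, rBoxS, rBoxSd, rBoxPdP, rBoxT2e, rST2e, rT2eXdX, rPdPXdX, rT2eXdP,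 gMcMc0, gMbMc0, gMbMc, gDc0Mc0, gDc0Mc, gDc0Mb, gDcMc0, gDcMc, gDcMb, gDcDc0, gDbMc0, gDbMc, gDbMb, gDbDc0, gDbDc, hMc0sq, hMcsq, hMbsq, hDc0sq, hDcsq, hDbsq, liftE cMc0Box, liftE cMc0S, liftE cMc0Sd, liftE cMc0XdP, liftE cMc0PdP, liftE cMc0XdX, liftE cMc0T2e, liftE cMcBox, liftE cMcS, liftE cMcSd, liftE cMcXdP, liftE cMcPdP, liftE cMcXdX, liftE cMcT2e, liftE cMbBox, liftE cMbS, liftE cMbSd, liftE cMbXdP, liftE cMbPdP, liftE cMbXdX, liftE cMbT2e, liftE cDc0Box, liftE cDc0S, liftE cDc0Sd, liftE cDc0XdP, liftE cDc0PdP, liftE cDc0XdX, liftE cDc0T2e, liftE cDcBox, liftE cDcS, liftE cDcSd, liftE cDcXdP, liftE cDcPdP, liftE cDcXdX, liftE cDcT2e, liftE cDbBox, liftE cDbS, liftE cDbSd, liftE cDbXdP, liftE cDbPdP, liftE cDbXdX, liftE cDbT2e, liftE rBoxXdP, liftE rBoxXdX, liftE rSSd, liftE rSXdP, liftE rSdXdP,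 liftE rXdXXdP, liftE rPdPXdP, liftE rSdT2e, liftE rSXdX, liftE rSdXdX, liftE rSPdP, liftE rSdPdP, liftE rT2ePdP, liftE rBoxS, liftE rBoxSd, liftE rBoxPdP, liftE rBoxT2e, liftE rST2e, liftE rT2eXdX, liftE rPdPXdX, liftE rT2eXdP, liftE gMcMc0, liftE gMbMc0, liftE gMbMc, liftE gDc0Mc0, liftE gDc0Mc, liftE gDc0Mb, liftE gDcMc0, liftE gDcMc, liftE gDcMb, liftE gDcDc0, liftE gDbMc0, liftE gDbMc, liftE gDbMb, liftE gDbDc0, liftE gDbDc, liftE hMc0sq, liftE hMcsq, liftE hMbsq, liftE hDc0sq, liftE hDcsq, liftE hDbsq]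
    try abel
  clear cMc0Box cMc0S cMc0Sd cMc0XdP cMc0PdP cMc0XdX cMc0T2e cMcBox cMcS cMcSd cMcXdP cMcPdP cMcXdX cMcT2e cMbBox cMbS cMbSd cMbXdP cMbPdP cMbXdX cMbT2e cDc0Box cDc0S cDc0Sd cDc0XdP cDc0PdP cDc0XdX cDc0T2e cDcBox cDcS cDcSd cDcXdP cDcPdP cDcXdX cDcT2e cDbBox cDbS cDbSd cDbXdP cDbPdP cDbXdX cDbT2e rBoxXdP rBoxXdX rSSd rSXdP rSdXdP rXdXXdP rPdPXdP rSdT2e rSXdX rSdXdX rSPdP rSdPdP rT2ePdP rBoxS rBoxSd rBoxPdP rBoxT2e rST2e rT2eXdX rPdPXdX rT2eXdP gMcMc0 gMbMc0 gMbMc gDc0Mc0 gDc0Mc gDc0Mb gDcMc0 gDcMc gDcMb gDcDc0 gDbMc0 gDbMc gDbMb gDbDc0 gDbDc hMc0sq hMcsq hMbsq hDc0sq hDcsq hDbsq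
  -- vector-level facts
  have hA : (hop + Nop) Φ = ((t : ℝ) + 1) • Φ := by
    have h := hΦ1
    rw [sub_eq_zero] at h
    simpa [LinearMap.add_apply] using h
  have L4' : ∀ v : M, (hop + Nop) (T1 v) = T1 ((hop + Nop) v) - (T1 v + T1 v) := by
    intro v
    have := DFunLike.congr_fun L4 v
    simpa [Module.End.mul_apply, LinearMap.sub_apply, LinearMap.add_apply] using this
  have L5' : ∀ v : M, (hop + Nop) (Db v) = Db ((hop + Nop) v) - (Db v + Db v) := by
    intro v
    have := DFunLike.congr_fun L5 v
    simpa [Module.End.mul_apply, LinearMap.sub_apply, LinearMap.add_apply] using this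
  have hT2n : ∀ n : ℕ, T2 ((T1 ^ n) Φ) = 0 := by
    intro n
    have hc : T2 * T1 ^ n = T1 ^ n * T2 := (Commute.pow_right L2 n)
    have := DFunLike.congr_fun hc Φ
    simp only [Module.End.mul_apply] at this
    rw [this, hΦ2, map_zero]
  have hDbn : ∀ n : ℕ, Db ((T1 ^ n) Φ) = (T1 ^ n) (Db Φ) := by
    intro n
    have hc : Db * T1 ^ n = T1 ^ n * Db := (Commute.pow_right L3 n)
    have := DFunLike.congr_fun hc Φ
    simpa [Module.End.mul_apply] using this
  have eig : ∀ n : ℕ, (hop + Nop) ((T1 ^ n) (Db Φ)) = ((t : ℝ) - 1 - 2 * n) • (T1 ^ n) (Db Φ) := by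
    intro n
    induction n with
    | zero =>
      simp only [pow_zero, Module.End.one_apply, Nat.cast_zero]
      rw [L5' Φ, hA]
      rw [map_smul]
      module
    | succ n ih =>
      rw [pow_succ', Module.End.mul_apply, L4' _, ih, map_smul]
      push_cast
      module
  have hK : ∀ n : ℕ, Om (T1 ((T1 ^ n) Φ)) - T1 (Om ((T1 ^ n) Φ))
      = (2 * (n : ℝ) + 1 - t) • (T1 ^ n) (Db Φ) := by
    intro n
    have := DFunLike.congr_fun L1 ((T1 ^ n) Φ)
    simp only [Module.End.mul_apply, LinearMap.sub_apply] at this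
    rw [this, hT2n n, map_zero, hDbn n, eig n]
    module
  have main : ∀ n : ℕ, Om ((T1 ^ (n + 1)) Φ) - (T1 ^ (n + 1)) (Om Φ)
      = (((n : ℝ) + 1) * (((n : ℝ) + 1) - t)) • (T1 ^ n) (Db Φ) := by
    intro n
    induction n with
    | zero =>
      have h := hK 0
      simp only [pow_zero, pow_one, zero_add, Module.End.one_apply, Nat.cast_zero,
        mul_zero] at h ⊢
      rw [h]
      module
    | succ n ih =>
      have key : Om * T1 ^ (n + 1 + 1) - T1 ^ (n + 1 + 1) * Om
          = T1 * (Om * T1 ^ (n + 1) - T1 ^ (n + 1) * Om) + (Om * T1 - T1 * Om) * T1 ^ (n + 1) := by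
        rw [show T1 ^ (n + 1 + 1) = T1 * T1 ^ (n + 1) from pow_succ' T1 (n + 1)]
        noncomm_ring
      have happ := DFunLike.congr_fun key Φ
      simp only [Module.End.mul_apply, LinearMap.sub_apply, LinearMap.add_apply] at happ
      rw [happ, ih, hK (n + 1), map_smul,
        show T1 ((T1 ^ n) (Db Φ)) = (T1 ^ (n + 1)) (Db Φ) by
          rw [pow_succ', Module.End.mul_apply]]
      push_cast
      module
  obtain ⟨s, rfl⟩ : ∃ s, t = s + 1 := ⟨t - 1, (Nat.succ_pred_eq_of_pos ht).symm⟩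
  have h := main s
  simp only [Module.End.mul_apply, LinearMap.sub_apply]
  rw [h, show (((s : ℝ) + 1) * (((s : ℝ) + 1) - ((s + 1 : ℕ) : ℝ))) = 0 by push_cast; ring,
    zero_smul]
end
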